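/- For every M > 0 and every dimension d ≥ 1 there is a constant C = C(d,M) such that for all t > 0 and all v ∈ ℝ^d with |v| ≤ M√t: ∫_{ℝ^d} |x|² |Γ(t,x) − Γ(t,x−v)| dx ≤ C √t |v|, where Γ(t,x) = (4πt)^{−d/2} e^{−|x|²/(4t)}. -/

import Mathlib

open MeasureTheory Real

private lemma exp_diff_le (a b : ℝ) :
    |Real.exp (-a) - Real.exp (-b)| ≤ |a - b| * Real.exp (-(min a b)) := by
  wlog h : a ≤ b generalizing a b
  · rw [abs_sub_comm, abs_sub_comm a b, min_comm]
    exact this b a (le_of_not_ge h)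
  rw [min_eq_left h]
  have h1 : Real.exp (-b) ≤ Real.exp (-a) := Real.exp_le_exp.2 (by linarith)
  rw [abs_of_nonneg (by linarith), abs_of_nonpos (by linarith)]
  have hb : Real.exp (-b) = Real.exp (-a) * Real.exp (a - b) := by
    rw [← Real.exp_add]; ring_nf
  have h2 : 1 - Real.exp (a - b) ≤ b - a := by
    have := Real.add_one_le_exp (a - b); linarith
  have h3 := Real.exp_pos (-a)
  calc Real.exp (-a) - Real.exp (-b) = Real.exp (-a) * (1 - Real.exp (a - b)) := by
        rw [hb]; ring
    _ ≤ Real.exp (-a) * (b - a) := mul_le_mul_of_nonneg_left h2 h3.le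
    _ = -(a - b) * Real.exp (-a) := by ring

private lemma integrable_exp_neg_sq_norm (d : ℕ) {b : ℝ} (hb : 0 < b) :
    Integrable (fun x : EuclideanSpace ℝ (Fin d) => Real.exp (-b * ‖x‖ ^ 2)) := by
  have h := GaussianFourier.integrable_cexp_neg_mul_sq_norm_add
    (V := EuclideanSpace ℝ (Fin d)) (b := (b : ℂ)) (by simpa using hb) 0 0
  refine h.norm.congr (Filter.Eventually.of_forall fun x => ?_)
  simp only [Complex.norm_exp]
  norm_num
  left
  norm_cast

private lemma integrable_pow_exp (d k : ℕ) :
    Integrable (fun x : EuclideanSpace ℝ (Fin d) => ‖x‖ ^ k * Real.exp (-‖x‖ ^ 2 / 8)) := by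
  have hg := (integrable_exp_neg_sq_norm d (b := 1/16) (by norm_num)).const_mul
    (Real.exp (4 * (k : ℝ) ^ 2))
  refine hg.mono' ?_ (Filter.Eventually.of_forall fun x => ?_)
  · exact (Continuous.mul (by continuity) (by continuity)).aestronglyMeasurable
  · have hr : (0:ℝ) ≤ ‖x‖ := norm_nonneg x
    have h1 : ‖x‖ ≤ Real.exp ‖x‖ := by have := Real.add_one_le_exp ‖x‖; linarith
    have h2 : ‖x‖ ^ k ≤ Real.exp ((k : ℝ) * ‖x‖) := by
      calc ‖x‖ ^ k ≤ (Real.exp ‖x‖) ^ k := pow_le_pow_left₀ hr h1 k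
        _ = Real.exp ((k : ℝ) * ‖x‖) := by rw [← Real.exp_nat_mul]
    have h3 : (k : ℝ) * ‖x‖ + (-‖x‖ ^ 2 / 8) ≤ 4 * (k:ℝ)^2 + (-(1/16) * ‖x‖^2) := by
      nlinarith [sq_nonneg (‖x‖ / 4 - 2 * (k:ℝ))]
    have h4 : (0:ℝ) < Real.exp (-‖x‖ ^ 2 / 8) := Real.exp_pos _
    rw [Real.norm_eq_abs, abs_of_nonneg (by positivity)]
    calc ‖x‖ ^ k * Real.exp (-‖x‖ ^ 2 / 8)
        ≤ Real.exp ((k:ℝ) * ‖x‖) * Real.exp (-‖x‖ ^ 2 / 8) :=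
          mul_le_mul_of_nonneg_right h2 h4.le
      _ = Real.exp ((k:ℝ) * ‖x‖ + (-‖x‖ ^ 2 / 8)) := (Real.exp_add _ _).symm
      _ ≤ Real.exp (4 * (k:ℝ)^2 + (-(1/16) * ‖x‖^2)) := Real.exp_le_exp.2 h3
      _ = Real.exp (4 * (k:ℝ)^2) * Real.exp (-(1/16) * ‖x‖^2) := Real.exp_add _ _

private lemma key_lemma (d : ℕ) (M : ℝ) (hM : 0 < M) :
    ∃ C : ℝ, 0 < C ∧ ∀ w : EuclideanSpace ℝ (Fin d), ‖w‖ ≤ M →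
      (∫ y : EuclideanSpace ℝ (Fin d),
          ‖y‖ ^ 2 * |Real.exp (-‖y‖ ^ 2 / 4) - Real.exp (-‖y - w‖ ^ 2 / 4)|)
        ≤ C * ‖w‖ := by
  classical
  set I : ℝ := ∫ y : EuclideanSpace ℝ (Fin d),
      (2 * ‖y‖ ^ 3 + M * ‖y‖ ^ 2) * Real.exp (-‖y‖ ^ 2 / 8) with hIdef
  have hI0 : 0 ≤ I := integral_nonneg fun y => by positivity
  refine ⟨Real.exp (M ^ 2 / 4) / 4 * I + 1, by positivity, fun w hw => ?_⟩
  have hbase : Integrable (fun y : EuclideanSpace ℝ (Fin d) =>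
      (2 * ‖y‖ ^ 3 + M * ‖y‖ ^ 2) * Real.exp (-‖y‖ ^ 2 / 8)) := by
    have h := ((integrable_pow_exp d 3).const_mul 2).add ((integrable_pow_exp d 2).const_mul M)
    exact h.congr (Filter.Eventually.of_forall fun y => by simp only [Pi.add_apply]; ring)
  have hg : Integrable (fun y : EuclideanSpace ℝ (Fin d) =>
      (‖w‖ * (Real.exp (M ^ 2 / 4) / 4)) *
        ((2 * ‖y‖ ^ 3 + M * ‖y‖ ^ 2) * Real.exp (-‖y‖ ^ 2 / 8))) :=
    hbase.const_mul _
  have hmono : ∀ y : EuclideanSpace ℝ (Fin d),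
      ‖y‖ ^ 2 * |Real.exp (-‖y‖ ^ 2 / 4) - Real.exp (-‖y - w‖ ^ 2 / 4)| ≤
      (‖w‖ * (Real.exp (M ^ 2 / 4) / 4)) *
        ((2 * ‖y‖ ^ 3 + M * ‖y‖ ^ 2) * Real.exp (-‖y‖ ^ 2 / 8)) := by
    intro y
    have hw0 : (0:ℝ) ≤ ‖w‖ := norm_nonneg w
    have hy0 : (0:ℝ) ≤ ‖y‖ := norm_nonneg y
    have hyw0 : (0:ℝ) ≤ ‖y - w‖ := norm_nonneg _
    have hd := exp_diff_le (‖y‖ ^ 2 / 4) (‖y - w‖ ^ 2 / 4)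
    -- bound |a - b|
    have h1 : |‖y‖ - ‖y - w‖| ≤ ‖w‖ := by
      have := abs_norm_sub_norm_le y (y - w)
      simpa using this
    have h2 : ‖y - w‖ ≤ ‖y‖ + ‖w‖ := norm_sub_le y w
    have habs : |‖y‖ ^ 2 / 4 - ‖y - w‖ ^ 2 / 4| ≤ ‖w‖ * (2 * ‖y‖ + M) / 4 := by
      have e : ‖y‖ ^ 2 / 4 - ‖y - w‖ ^ 2 / 4 =
          (‖y‖ - ‖y - w‖) * ((‖y‖ + ‖y - w‖) / 4) := by ring
      rw [e, abs_mul, abs_of_nonneg (show (0:ℝ) ≤ (‖y‖ + ‖y - w‖) / 4 by positivity)]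
      have : (‖y‖ + ‖y - w‖) / 4 ≤ (2 * ‖y‖ + M) / 4 := by
        have := hw.trans_eq rfl; linarith
      calc |‖y‖ - ‖y - w‖| * ((‖y‖ + ‖y - w‖) / 4)
          ≤ ‖w‖ * ((2 * ‖y‖ + M) / 4) :=
            mul_le_mul h1 this (by positivity) hw0
        _ = ‖w‖ * (2 * ‖y‖ + M) / 4 := by ring
    -- bound exp(-min)
    have hmin : ‖y‖ ^ 2 / 8 - M ^ 2 / 4 ≤ min (‖y‖ ^ 2 / 4) (‖y - w‖ ^ 2 / 4) := by
      refine le_min (by nlinarith) ?_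
      have h3 : ‖y‖ ≤ ‖y - w‖ + ‖w‖ := by
        have := norm_le_norm_add_norm_sub' y w; linarith
      have h4 : ‖y‖ * ‖y‖ ≤ (‖y - w‖ + ‖w‖) * (‖y - w‖ + ‖w‖) :=
        mul_self_le_mul_self hy0 h3
      nlinarith [sq_nonneg (‖y - w‖ - ‖w‖), hw, hw0]
    have hexp : Real.exp (-(min (‖y‖ ^ 2 / 4) (‖y - w‖ ^ 2 / 4))) ≤
        Real.exp (M ^ 2 / 4) * Real.exp (-‖y‖ ^ 2 / 8) := by
      rw [← Real.exp_add]
      apply Real.exp_le_exp.2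
      rw [neg_div]
      linarith
    have hcomb : |Real.exp (-(‖y‖ ^ 2 / 4)) - Real.exp (-(‖y - w‖ ^ 2 / 4))| ≤
        (‖w‖ * (2 * ‖y‖ + M) / 4) * (Real.exp (M ^ 2 / 4) * Real.exp (-‖y‖ ^ 2 / 8)) :=
      hd.trans (mul_le_mul habs hexp (Real.exp_pos _).le (by positivity))
    rw [neg_div, neg_div]
    calc ‖y‖ ^ 2 * |Real.exp (-(‖y‖ ^ 2 / 4)) - Real.exp (-(‖y - w‖ ^ 2 / 4))|
        ≤ ‖y‖ ^ 2 * ((‖w‖ * (2 * ‖y‖ + M) / 4) *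
            (Real.exp (M ^ 2 / 4) * Real.exp (-‖y‖ ^ 2 / 8))) :=
          mul_le_mul_of_nonneg_left hcomb (by positivity)
      _ = (‖w‖ * (Real.exp (M ^ 2 / 4) / 4)) *
            ((2 * ‖y‖ ^ 3 + M * ‖y‖ ^ 2) * Real.exp (-‖y‖ ^ 2 / 8)) := by ring
  have hle := integral_mono_of_nonneg
    (Filter.Eventually.of_forall fun y => by positivity) hg
    (Filter.Eventually.of_forall hmono)
  rw [MeasureTheory.integral_const_mul] at hle
  calc (∫ y : EuclideanSpace ℝ (Fin d),
          ‖y‖ ^ 2 * |Real.exp (-‖y‖ ^ 2 / 4) - Real.exp (-‖y - w‖ ^ 2 / 4)|)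
      ≤ ‖w‖ * (Real.exp (M ^ 2 / 4) / 4) * I := hle
    _ ≤ (Real.exp (M ^ 2 / 4) / 4 * I + 1) * ‖w‖ := by nlinarith [norm_nonneg w]

/-- Second-moment estimate for the difference of two Gaussians:
`∫ |x|² |Γ(t,x) − Γ(t,x−v)| dx ≤ C √t |v|` for `|v| ≤ M √t`. -/
theorem stmt_12 (d : ℕ) (hd : 1 ≤ d) (M : ℝ) (hM : 0 < M) :
    ∃ C : ℝ, 0 < C ∧ ∀ (t : ℝ), 0 < t → ∀ v : EuclideanSpace ℝ (Fin d),
      ‖v‖ ≤ M * Real.sqrt t →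
      (∫ x : EuclideanSpace ℝ (Fin d),
          ‖x‖ ^ 2 * |(4 * π * t) ^ (-(d : ℝ) / 2) * Real.exp (-‖x‖ ^ 2 / (4 * t)) -
            (4 * π * t) ^ (-(d : ℝ) / 2) * Real.exp (-‖x - v‖ ^ 2 / (4 * t))|)
        ≤ C * Real.sqrt t * ‖v‖ := by
  obtain ⟨C₁, hC₁, hkey⟩ := key_lemma d M hM
  have h4π : (0:ℝ) < 4 * π := by positivity
  refine ⟨(4 * π) ^ (-(d : ℝ) / 2) * C₁,
    mul_pos (Real.rpow_pos_of_pos h4π _) hC₁, fun t ht v hv => ?_⟩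
  set c : ℝ := Real.sqrt t with hcdef
  have hc : 0 < c := Real.sqrt_pos.2 ht
  have hc2 : c ^ 2 = t := Real.sq_sqrt ht.le
  set w : EuclideanSpace ℝ (Fin d) := c⁻¹ • v with hwdef
  have hcw : c • w = v := smul_inv_smul₀ hc.ne' v
  have hwn : ‖w‖ = c⁻¹ * ‖v‖ := by
    rw [hwdef, norm_smul, Real.norm_eq_abs, abs_of_pos (inv_pos.2 hc)]
  have hwM : ‖w‖ ≤ M := by
    rw [hwn]
    rw [inv_mul_le_iff₀ hc]
    linarith [hv]
  set A : ℝ := (4 * π * t) ^ (-(d : ℝ) / 2) with hAdef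
  have hA : 0 < A := Real.rpow_pos_of_pos (by positivity) _
  set F : EuclideanSpace ℝ (Fin d) → ℝ := fun x =>
    ‖x‖ ^ 2 * |A * Real.exp (-‖x‖ ^ 2 / (4 * t)) - A * Real.exp (-‖x - v‖ ^ 2 / (4 * t))| with hF
  have hcs := MeasureTheory.Measure.integral_comp_smul
    (volume : Measure (EuclideanSpace ℝ (Fin d))) F c
  rw [finrank_euclideanSpace_fin, smul_eq_mul,
    abs_of_pos (inv_pos.2 (pow_pos hc d))] at hcs
  have hint : (∫ x, F x) = c ^ d * ∫ y, F (c • y) := by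
    rw [hcs, ← mul_assoc, mul_inv_cancel₀ (pow_pos hc d).ne', one_mul]
  have hpt : ∀ y : EuclideanSpace ℝ (Fin d), F (c • y) =
      (t * A) * (‖y‖ ^ 2 * |Real.exp (-‖y‖ ^ 2 / 4) - Real.exp (-‖y - w‖ ^ 2 / 4)|) := by
    intro y
    have hn1 : ‖c • y‖ ^ 2 = t * ‖y‖ ^ 2 := by
      rw [norm_smul, Real.norm_eq_abs, abs_of_pos hc, mul_pow, hc2]
    have hn2 : ‖c • y - v‖ ^ 2 = t * ‖y - w‖ ^ 2 := by
      rw [← hcw, ← smul_sub, norm_smul, Real.norm_eq_abs, abs_of_pos hc, mul_pow, hc2]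
    have he1 : -‖c • y‖ ^ 2 / (4 * t) = -‖y‖ ^ 2 / 4 := by
      rw [hn1]; field_simp
    have he2 : -‖c • y - v‖ ^ 2 / (4 * t) = -‖y - w‖ ^ 2 / 4 := by
      rw [hn2]; field_simp
    rw [hF]
    simp only []
    rw [he1, he2, hn1,
      show A * Real.exp (-‖y‖ ^ 2 / 4) - A * Real.exp (-‖y - w‖ ^ 2 / 4) =
        A * (Real.exp (-‖y‖ ^ 2 / 4) - Real.exp (-‖y - w‖ ^ 2 / 4)) from by ring,
      abs_mul, abs_of_pos hA]
    ring
  have hJ : (∫ y, F (c • y)) = (t * A) *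
      ∫ y : EuclideanSpace ℝ (Fin d),
        ‖y‖ ^ 2 * |Real.exp (-‖y‖ ^ 2 / 4) - Real.exp (-‖y - w‖ ^ 2 / 4)| := by
    simp_rw [hpt]
    exact MeasureTheory.integral_const_mul _ _
  have hbound : (∫ x, F x) ≤ c ^ d * (t * A * (C₁ * ‖w‖)) := by
    rw [hint, hJ]
    have := hkey w hwM
    have h1 : (t * A) * (∫ y : EuclideanSpace ℝ (Fin d),
        ‖y‖ ^ 2 * |Real.exp (-‖y‖ ^ 2 / 4) - Real.exp (-‖y - w‖ ^ 2 / 4)|) ≤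
        (t * A) * (C₁ * ‖w‖) :=
      mul_le_mul_of_nonneg_left this (by positivity)
    have h2 : (0:ℝ) ≤ c ^ d := (pow_pos hc d).le
    exact mul_le_mul_of_nonneg_left h1 h2
  have hcdA : c ^ d * A = (4 * π) ^ (-(d : ℝ) / 2) := by
    have hAsplit : A = (4 * π) ^ (-(d : ℝ) / 2) * t ^ (-(d : ℝ) / 2) := by
      rw [hAdef, Real.mul_rpow h4π.le ht.le]
    have hcd : c ^ d = t ^ ((d : ℝ) / 2) := by
      rw [hcdef, ← Real.rpow_natCast (Real.sqrt t) d, Real.sqrt_eq_rpow,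
        ← Real.rpow_mul ht.le]
      rw [show (1/2 : ℝ) * (d:ℕ) = (d:ℝ)/2 from by push_cast; ring]
    rw [hAsplit, hcd]
    calc t ^ ((d:ℝ)/2) * ((4*π) ^ (-(d:ℝ)/2) * t ^ (-(d:ℝ)/2))
        = (4*π) ^ (-(d:ℝ)/2) * (t ^ ((d:ℝ)/2) * t ^ (-(d:ℝ)/2)) := by ring
      _ = (4*π) ^ (-(d:ℝ)/2) * t ^ ((d:ℝ)/2 + -(d:ℝ)/2) := by
          rw [Real.rpow_add ht]
      _ = (4*π) ^ (-(d:ℝ)/2) := by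
          rw [show (d:ℝ)/2 + -(d:ℝ)/2 = 0 from by ring, Real.rpow_zero, mul_one]
  have htc : t * c⁻¹ = c := by
    rw [← hc2]; field_simp
  have hfinal : c ^ d * (t * A * (C₁ * ‖w‖)) =
      (4 * π) ^ (-(d : ℝ) / 2) * C₁ * Real.sqrt t * ‖v‖ := by
    rw [hwn, ← hcdef]
    calc c ^ d * (t * A * (C₁ * (c⁻¹ * ‖v‖)))
        = (c ^ d * A) * C₁ * (t * c⁻¹) * ‖v‖ := by ring
      _ = (4 * π) ^ (-(d : ℝ) / 2) * C₁ * c * ‖v‖ := by rw [hcdA, htc]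
  calc (∫ x : EuclideanSpace ℝ (Fin d),
          ‖x‖ ^ 2 * |(4 * π * t) ^ (-(d : ℝ) / 2) * Real.exp (-‖x‖ ^ 2 / (4 * t)) -
            (4 * π * t) ^ (-(d : ℝ) / 2) * Real.exp (-‖x - v‖ ^ 2 / (4 * t))|)
      = ∫ x, F x := rfl
    _ ≤ c ^ d * (t * A * (C₁ * ‖w‖)) := hbound
    _ = (4 * π) ^ (-(d : ℝ) / 2) * C₁ * Real.sqrt t * ‖v‖ := hfinal
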